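/- arXiv:1905.12730 — 2 statements merged into one kernel-verified Lean document; each statement's English description precedes it below -/
import Mathlib

section
/- Deterministic core of the product desynchronization lemma: Let d ≥ 1, let R₁, R₂ be real d×d matrices, let x, y ∈ ℝ^d, and let δ₁, δ₂, δ_I ≥ 0 and α₂ ∈ [0,1]. If |⟨R₁x, y⟩| ≤ δ₁‖x‖‖y‖, ‖R₁x‖² ≤ (1 + δ_I)‖x‖², and |⟨R₂(R₁x), y⟩ − α₂⟨R₁x, y⟩| ≤ δ₂‖R₁x‖‖y‖, then |⟨R₂R₁x, y⟩| ≤ (δ₁ + δ₂·√(1 + δ_I))·‖x‖‖y‖. -/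
/-- The standard inner product on `ℝ^d` (vectors as functions `Fin d → ℝ`). -/
def ip {d : ℕ} (v w : Fin d → ℝ) : ℝ := ∑ i, v i * w i

/-- The squared Euclidean norm `‖v‖²` on `ℝ^d`. -/
def sqNorm {d : ℕ} (v : Fin d → ℝ) : ℝ := ∑ i, v i ^ 2

/-- The Euclidean norm `‖v‖` on `ℝ^d`. -/
noncomputable def l2 {d : ℕ} (v : Fin d → ℝ) : ℝ := Real.sqrt (∑ i, v i ^ 2)

/-- **Deterministic core of the product desynchronization lemma.**
If `|⟨R₁x, y⟩| ≤ δ₁‖x‖‖y‖`, `‖R₁x‖² ≤ (1 + δ_I)‖x‖²`, and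
`|⟨R₂(R₁x), y⟩ − α₂⟨R₁x, y⟩| ≤ δ₂‖R₁x‖‖y‖`, then
`|⟨R₂R₁x, y⟩| ≤ (δ₁ + δ₂·√(1 + δ_I))·‖x‖‖y‖`. -/
theorem product_desynchronization
    (d : ℕ) (hd : 1 ≤ d) (R₁ R₂ : Matrix (Fin d) (Fin d) ℝ)
    (x y : Fin d → ℝ) (δ₁ δ₂ δI α₂ : ℝ)
    (hδ₁ : 0 ≤ δ₁) (hδ₂ : 0 ≤ δ₂) (hδI : 0 ≤ δI) (hα₂0 : 0 ≤ α₂) (hα₂1 : α₂ ≤ 1)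
    (h1 : |ip (R₁.mulVec x) y| ≤ δ₁ * l2 x * l2 y)
    (h2 : sqNorm (R₁.mulVec x) ≤ (1 + δI) * sqNorm x)
    (h3 : |ip (R₂.mulVec (R₁.mulVec x)) y - α₂ * ip (R₁.mulVec x) y|
            ≤ δ₂ * l2 (R₁.mulVec x) * l2 y) :
    |ip ((R₂ * R₁).mulVec x) y| ≤ (δ₁ + δ₂ * Real.sqrt (1 + δI)) * (l2 x * l2 y) := by
  have hmv : (R₂ * R₁).mulVec x = R₂.mulVec (R₁.mulVec x) := by
    rw [← Matrix.mulVec_mulVec]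
  rw [hmv]
  have hl2x : 0 ≤ l2 x := Real.sqrt_nonneg _
  have hl2y : 0 ≤ l2 y := Real.sqrt_nonneg _
  have hR1 : l2 (R₁.mulVec x) ≤ Real.sqrt (1 + δI) * l2 x := by
    have : l2 (R₁.mulVec x) ≤ Real.sqrt ((1 + δI) * sqNorm x) :=
      Real.sqrt_le_sqrt h2
    calc l2 (R₁.mulVec x) ≤ Real.sqrt ((1 + δI) * sqNorm x) := this
      _ = Real.sqrt (1 + δI) * l2 x := by
          rw [Real.sqrt_mul (by linarith)]; rfl
  have key : |ip (R₂.mulVec (R₁.mulVec x)) y|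
      ≤ α₂ * |ip (R₁.mulVec x) y| + δ₂ * l2 (R₁.mulVec x) * l2 y := by
    have := abs_sub_abs_le_abs_sub (ip (R₂.mulVec (R₁.mulVec x)) y)
      (α₂ * ip (R₁.mulVec x) y)
    have habs : |α₂ * ip (R₁.mulVec x) y| = α₂ * |ip (R₁.mulVec x) y| := by
      rw [abs_mul, abs_of_nonneg hα₂0]
    linarith [h3]
  have h4 : α₂ * |ip (R₁.mulVec x) y| ≤ δ₁ * l2 x * l2 y := by
    calc α₂ * |ip (R₁.mulVec x) y| ≤ 1 * |ip (R₁.mulVec x) y| := by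
          apply mul_le_mul_of_nonneg_right hα₂1 (abs_nonneg _)
      _ = |ip (R₁.mulVec x) y| := one_mul _
      _ ≤ δ₁ * l2 x * l2 y := h1
  have h5 : δ₂ * l2 (R₁.mulVec x) * l2 y ≤ δ₂ * (Real.sqrt (1 + δI) * l2 x) * l2 y := by
    apply mul_le_mul_of_nonneg_right _ hl2y
    exact mul_le_mul_of_nonneg_left hR1 hδ₂
  calc |ip (R₂.mulVec (R₁.mulVec x)) y|
      ≤ α₂ * |ip (R₁.mulVec x) y| + δ₂ * l2 (R₁.mulVec x) * l2 y := key
    _ ≤ δ₁ * l2 x * l2 y + δ₂ * (Real.sqrt (1 + δI) * l2 x) * l2 y := by linarith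
    _ = (δ₁ + δ₂ * Real.sqrt (1 + δI)) * (l2 x * l2 y) := by ring
end

section
/- Deterministic core of the different-matrices desynchronization lemma: Let d ≥ 1, let R₁, R₂ be real d×d matrices, let x, y ∈ ℝ^d, and let α_I, δ_I, δ_D ≥ 0 and α_D ≥ 0. If ‖R₁x‖² ≤ (α_I + δ_I)‖x‖², |⟨R₂y, R₁x⟩ − α_D⟨y, R₁x⟩| ≤ δ_D‖R₁x‖‖y‖, and |⟨R₁x, y⟩ − α_D⟨x, y⟩| ≤ δ_D‖x‖‖y‖, then |⟨R₁x, R₂y⟩ − α_D²⟨x, y⟩| ≤ (δ_D·√(α_I + δ_I) + α_D·δ_D)·‖x‖‖y‖. -/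
lemma ip_comm {d : ℕ} (v w : Fin d → ℝ) : ip v w = ip w v := by
  simp [ip, mul_comm]

lemma l2_nonneg {d : ℕ} (v : Fin d → ℝ) : 0 ≤ l2 v := Real.sqrt_nonneg _

/-- **Deterministic core of the different-matrices desynchronization lemma.**
If `‖R₁x‖² ≤ (α_I + δ_I)‖x‖²`, `|⟨R₂y, R₁x⟩ − α_D⟨y, R₁x⟩| ≤ δ_D‖R₁x‖‖y‖`, and
`|⟨R₁x, y⟩ − α_D⟨x, y⟩| ≤ δ_D‖x‖‖y‖`, then
`|⟨R₁x, R₂y⟩ − α_D²⟨x, y⟩| ≤ (δ_D·√(α_I + δ_I) + α_D·δ_D)·‖x‖‖y‖`. -/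
theorem different_matrices_desynchronization
    (d : ℕ) (hd : 1 ≤ d) (R₁ R₂ : Matrix (Fin d) (Fin d) ℝ)
    (x y : Fin d → ℝ) (αI δI δD αD : ℝ)
    (hαI : 0 ≤ αI) (hδI : 0 ≤ δI) (hδD : 0 ≤ δD) (hαD : 0 ≤ αD)
    (h1 : sqNorm (R₁.mulVec x) ≤ (αI + δI) * sqNorm x)
    (h2 : |ip (R₂.mulVec y) (R₁.mulVec x) - αD * ip y (R₁.mulVec x)|
            ≤ δD * l2 (R₁.mulVec x) * l2 y)
    (h3 : |ip (R₁.mulVec x) y - αD * ip x y| ≤ δD * l2 x * l2 y) :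
    |ip (R₁.mulVec x) (R₂.mulVec y) - αD ^ 2 * ip x y|
      ≤ (δD * Real.sqrt (αI + δI) + αD * δD) * (l2 x * l2 y) := by
  have hL : l2 (R₁.mulVec x) ≤ Real.sqrt (αI + δI) * l2 x := by
    have : l2 (R₁.mulVec x) ≤ Real.sqrt ((αI + δI) * sqNorm x) :=
      Real.sqrt_le_sqrt h1
    calc l2 (R₁.mulVec x) ≤ Real.sqrt ((αI + δI) * sqNorm x) := this
      _ = Real.sqrt (αI + δI) * l2 x := by
          rw [Real.sqrt_mul (by linarith)]; rfl
  have key : ip (R₁.mulVec x) (R₂.mulVec y) - αD ^ 2 * ip x y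
      = (ip (R₂.mulVec y) (R₁.mulVec x) - αD * ip y (R₁.mulVec x))
        + αD * (ip (R₁.mulVec x) y - αD * ip x y) := by
    rw [ip_comm (R₂.mulVec y), ip_comm y]; ring
  rw [key]
  calc |(ip (R₂.mulVec y) (R₁.mulVec x) - αD * ip y (R₁.mulVec x))
        + αD * (ip (R₁.mulVec x) y - αD * ip x y)|
      ≤ |ip (R₂.mulVec y) (R₁.mulVec x) - αD * ip y (R₁.mulVec x)|
        + |αD * (ip (R₁.mulVec x) y - αD * ip x y)| := abs_add_le _ _
    _ ≤ δD * l2 (R₁.mulVec x) * l2 y + αD * (δD * l2 x * l2 y) := by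
        refine add_le_add h2 ?_
        rw [abs_mul, abs_of_nonneg hαD]
        exact mul_le_mul_of_nonneg_left h3 hαD
    _ ≤ (δD * Real.sqrt (αI + δI) + αD * δD) * (l2 x * l2 y) := by
        have h4 : δD * l2 (R₁.mulVec x) * l2 y
            ≤ δD * (Real.sqrt (αI + δI) * l2 x) * l2 y := by
          have := mul_le_mul_of_nonneg_left hL hδD
          exact mul_le_mul_of_nonneg_right this (l2_nonneg y)
        nlinarith [l2_nonneg x, l2_nonneg y]
end
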